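/- Let n ≥ 1, let q ∈ ℂ with q ≠ 0 and q ≠ −1, let m ∈ ℂ satisfy m² = q·(1+q)^{−2}, and let z_1, …, z_n ∈ ℂ satisfy z_i · z_{n+1−i} = q for all i; if n is odd assume moreover z_{(n+1)/2} = m·(1+q). Then the system m·(1+q)·v^i = z_i·v^{n+1−i} (1 ≤ i ≤ n) has a solution with all v^i nonzero. More precisely, for every choice of nonzero values v^1, …, v^{⌈n/2⌉} there is a unique extension to a solution (v^1, …, v^n) of the system, namely v^{n+1−i} = m·(1+q)·v^i / z_i for 1 ≤ i ≤ ⌊n/2⌋, and this extension has all entries nonzero. -/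
import Mathlib


open Matrix

/-- let `n ≥ 1`, `q ≠ 0`, `q ≠ −1`, `m² = q·(1+q)⁻²`, and let
`z_1, …, z_n` satisfy `z_i·z_{n+1−i} = q` (with `z_{(n+1)/2} = m·(1+q)` if `n` is
odd, i.e. the 0-indexed middle entry `z ⟨n/2⟩`). Then system (8),
`m·(1+q)·v^i = z_i·v^{n+1−i}` (`1 ≤ i ≤ n`), has a solution with all `v^i` nonzero;
more precisely, every choice of nonzero values `v^1, …, v^{⌈n/2⌉}` (the indices
`i` with 0-indexed value `< (n+1)/2`) extends uniquely to a solution, namely via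
`v^{n+1−i} = m·(1+q)·v^i / z_i` for `1 ≤ i ≤ ⌊n/2⌋`, and all entries of this
extension are nonzero. -/
theorem system8_solvable (n : ℕ) (hn : 1 ≤ n) (q m : ℂ) (hq0 : q ≠ 0)
    (hq1 : q ≠ -1) (hm : m ^ 2 = q * ((1 + q) ^ 2)⁻¹)
    (z : Fin n → ℂ) (hz : ∀ i : Fin n, z i * z i.rev = q)
    (hodd : n % 2 = 1 → z ⟨n / 2, by omega⟩ = m * (1 + q)) :
    (∃ v : Fin n → ℂ, (∀ i : Fin n, v i ≠ 0) ∧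
        ∀ i : Fin n, m * (1 + q) * v i = z i * v i.rev) ∧
      ∀ v₀ : Fin n → ℂ, (∀ i : Fin n, (i : ℕ) < (n + 1) / 2 → v₀ i ≠ 0) →
        (∃! v : Fin n → ℂ,
            (∀ i : Fin n, (i : ℕ) < (n + 1) / 2 → v i = v₀ i) ∧
              ∀ i : Fin n, m * (1 + q) * v i = z i * v i.rev) ∧
          ∀ v : Fin n → ℂ,
            (∀ i : Fin n, (i : ℕ) < (n + 1) / 2 → v i = v₀ i) →
            (∀ i : Fin n, m * (1 + q) * v i = z i * v i.rev) →
            (∀ i : Fin n, v i ≠ 0) ∧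
              ∀ i : Fin n, (i : ℕ) < n / 2 → v i.rev = m * (1 + q) * v i / z i := by
  have h1q : (1 + q) ≠ 0 := fun h => hq1 (by linear_combination h)
  have h2q : ((1 + q) ^ 2) ≠ 0 := pow_ne_zero _ h1q
  have hc2 : (m * (1 + q)) ^ 2 = q := by
    field_simp at hm
    linear_combination hm
  have hc : m * (1 + q) ≠ 0 := fun h => hq0 (by rw [← hc2, h]; ring)
  have hzne : ∀ i, z i ≠ 0 := fun i h => hq0 (by rw [← hz i, h, zero_mul])
  have key : ∀ v₀ : Fin n → ℂ, (∀ i : Fin n, (i : ℕ) < (n + 1) / 2 → v₀ i ≠ 0) →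
      ∃ v : Fin n → ℂ,
        (∀ i : Fin n, (i : ℕ) < (n + 1) / 2 → v i = v₀ i) ∧
        (∀ i : Fin n, m * (1 + q) * v i = z i * v i.rev) ∧
        (∀ i : Fin n, v i ≠ 0) ∧
        (∀ i : Fin n, ¬ (i : ℕ) < (n + 1) / 2 →
           v i = m * (1 + q) * v₀ i.rev / z i.rev) := by
    intro v₀ hv₀
    refine ⟨fun i => if (i : ℕ) < (n + 1) / 2 then v₀ i
        else m * (1 + q) * v₀ i.rev / z i.rev, ?_, ?_, ?_, ?_⟩
    · intro i hi; simp only [if_pos hi]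
    · intro i
      have hrev : (i.rev : ℕ) = n - (i + 1) := Fin.val_rev i
      have hi2 : (i : ℕ) < n := i.isLt
      rcases lt_or_ge (i : ℕ) (n / 2) with h | h
      · have hi1 : (i : ℕ) < (n + 1) / 2 := by omega
        have hir : ¬ (i.rev : ℕ) < (n + 1) / 2 := by omega
        simp only [if_pos hi1, if_neg hir, Fin.rev_rev]
        rw [mul_comm (z i), div_mul_cancel₀ _ (hzne i)]
      · rcases lt_or_ge (i : ℕ) ((n + 1) / 2) with h' | h'
        · have hmid : (i : ℕ) = n / 2 ∧ n % 2 = 1 := by omega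
          have hrev_eq : i.rev = i := by
            apply Fin.ext; omega
          have hieq : i = ⟨n / 2, by omega⟩ := Fin.ext hmid.1
          rw [hrev_eq]
          simp only [if_pos h']
          rw [hieq, hodd hmid.2]
        · have hir : (i.rev : ℕ) < (n + 1) / 2 := by omega
          simp only [if_neg (not_lt.mpr h'), if_pos hir]
          have hzi := hz i
          rw [mul_div_assoc', div_eq_iff (hzne i.rev)]
          linear_combination v₀ i.rev * hc2 - v₀ i.rev * hzi
    · intro i
      have hrev : (i.rev : ℕ) = n - (i + 1) := Fin.val_rev i
      have hi2 : (i : ℕ) < n := i.isLt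
      dsimp only
      split_ifs with h
      · exact hv₀ i h
      · exact div_ne_zero (mul_ne_zero hc (hv₀ _ (by omega))) (hzne _)
    · intro i hi; simp only [if_neg hi]
  obtain ⟨w₁, _, hw₁eq, hw₁ne, _⟩ := key (fun _ => 1) (fun i _ => one_ne_zero)
  refine ⟨⟨w₁, hw₁ne, hw₁eq⟩, ?_⟩
  intro v₀ hv₀
  obtain ⟨w, hw1, hw2, hw3, hw4⟩ := key v₀ hv₀
  have uniq : ∀ v : Fin n → ℂ,
      (∀ i : Fin n, (i : ℕ) < (n + 1) / 2 → v i = v₀ i) →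
      (∀ i : Fin n, m * (1 + q) * v i = z i * v i.rev) → v = w := by
    intro v hv1 hv2
    funext i
    have hrev : (i.rev : ℕ) = n - (i + 1) := Fin.val_rev i
    have hi2 : (i : ℕ) < n := i.isLt
    rcases lt_or_ge (i : ℕ) ((n + 1) / 2) with h | h
    · rw [hv1 i h, hw1 i h]
    · have hir : (i.rev : ℕ) < (n + 1) / 2 := by omega
      have heq := hv2 i.rev
      rw [Fin.rev_rev] at heq
      rw [hw4 i (not_lt.mpr h)]
      rw [eq_div_iff (hzne i.rev)]
      rw [hv1 i.rev hir] at heq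
      linear_combination -heq
  refine ⟨⟨w, ⟨hw1, hw2⟩, fun v hv => uniq v hv.1 hv.2⟩, ?_⟩
  intro v hv1 hv2
  have hvw : v = w := uniq v hv1 hv2
  refine ⟨hvw ▸ hw3, ?_⟩
  intro i _
  rw [eq_div_iff (hzne i)]
  linear_combination -(hv2 i)
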